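/- (Smith's WSPT rule.) Suppose all weights are nonnegative: w j ≥ 0 for every j ∈ J. Then the early WSPT schedule minimizes the total weighted completion time: for every feasible single-machine schedule S, ∑_{j∈J} w j · (S_WSPT j + p j) ≤ ∑_{j∈J} w j · (S j + p j), where S_WSPT denotes the early WSPT schedule. -/

import Mathlib

open Finset

lemma wspt_key {n : ℕ} (v q : Fin n → ℚ) (hv : ∀ i, 0 ≤ v i) (hq : ∀ i, 0 ≤ q i)
    (hr : ∀ l i : Fin n, l ≤ i → v i * q l ≤ v l * q i)
    (R : Fin n → Fin n → Prop) [DecidableRel R]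
    (hrefl : ∀ i, R i i) (htot : ∀ i l, R i l ∨ R l i) :
    ∑ i : Fin n, ∑ l : Fin n, (if l ≤ i then v i * q l else 0)
      ≤ ∑ i : Fin n, ∑ l : Fin n, (if R l i then v i * q l else 0) := by
  set L : Fin n → Fin n → ℚ := fun i l => if l ≤ i then v i * q l else 0 with hL
  set Rf : Fin n → Fin n → ℚ := fun i l => if R l i then v i * q l else 0 with hRf
  have hpair : ∀ i l : Fin n, l ≤ i → L i l + L l i ≤ Rf i l + Rf l i := by
    intro i l hle
    rcases eq_or_lt_of_le hle with h | h
    · subst h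
      simp [hL, hRf, hrefl]
    · have h1 : L i l = v i * q l := by simp [hL, hle]
      have h2 : L l i = 0 := by simp [hL, not_le.mpr h]
      rcases htot l i with hR | hR
      · have h3 : Rf i l = v i * q l := by simp [hRf, hR]
        have h4 : 0 ≤ Rf l i := by
          simp only [hRf]
          split
          · exact mul_nonneg (hv _) (hq _)
          · exact le_refl _
        rw [h1, h2, h3]; linarith
      · have h3 : Rf l i = v l * q i := by simp [hRf, hR]
        have h4 : 0 ≤ Rf i l := by
          simp only [hRf]; split
          · exact mul_nonneg (hv _) (hq _)
          · exact le_refl _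
        have h5 := hr l i hle
        rw [h1, h2, h3]; linarith
  have hpair' : ∀ i l : Fin n, L i l + L l i ≤ Rf i l + Rf l i := by
    intro i l
    rcases le_total l i with h | h
    · exact hpair i l h
    · have := hpair l i h; linarith
  have hcommL : ∑ i : Fin n, ∑ l : Fin n, L i l = ∑ i : Fin n, ∑ l : Fin n, L l i :=
    Finset.sum_comm
  have hcommR : ∑ i : Fin n, ∑ l : Fin n, Rf i l = ∑ i : Fin n, ∑ l : Fin n, Rf l i :=
    Finset.sum_comm
  have hmain : ∑ i : Fin n, ∑ l : Fin n, (L i l + L l i)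
      ≤ ∑ i : Fin n, ∑ l : Fin n, (Rf i l + Rf l i) :=
    Finset.sum_le_sum fun i _ => Finset.sum_le_sum fun l _ => hpair' i l
  simp only [Finset.sum_add_distrib] at hmain
  have hgoal : ∑ i : Fin n, ∑ l : Fin n, L i l ≤ ∑ i : Fin n, ∑ l : Fin n, Rf i l := by
    linarith
  exact hgoal

lemma wspt_sched_lb {J : Type*} [Fintype J] [DecidableEq J]
    (p : J → ℕ) (S : J → ℕ) (T0 : ℕ)
    (hp : ∀ j, 1 ≤ p j) (hlo : ∀ j, T0 ≤ S j)
    (hnol : ∀ j k, j ≠ k → S j + p j ≤ S k ∨ S k + p k ≤ S j) (j : J) :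
    T0 + ∑ k ∈ univ.filter (fun k => S k ≤ S j), p k ≤ S j + p j := by
  classical
  set F := univ.filter (fun k => S k ≤ S j) with hF
  have hdisj : (F : Set J).PairwiseDisjoint (fun k => Finset.Ico (S k) (S k + p k)) := by
    intro a _ b _ hab
    rcases hnol a b hab with h | h
    · apply Finset.disjoint_left.mpr
      intro x hx hx'
      simp only [Finset.mem_Ico] at hx hx'
      omega
    · apply Finset.disjoint_left.mpr
      intro x hx hx'
      simp only [Finset.mem_Ico] at hx hx'
      omega
  have hsub : F.biUnion (fun k => Finset.Ico (S k) (S k + p k)) ⊆ Finset.Ico T0 (S j + p j) := by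
    intro x hx
    simp only [Finset.mem_biUnion] at hx
    obtain ⟨k, hkF, hxk⟩ := hx
    simp only [hF, Finset.mem_filter] at hkF
    have hk2 : S k + p k ≤ S j + p j := by
      by_cases hkj : k = j
      · subst hkj; exact le_refl _
      · rcases hnol k j hkj with h | h
        · omega
        · have := hp j; omega
    simp only [Finset.mem_Ico] at hxk ⊢
    have := hlo k
    omega
  have hcard : ∑ k ∈ F, p k = (F.biUnion (fun k => Finset.Ico (S k) (S k + p k))).card := by
    rw [Finset.card_biUnion hdisj]
    simp [Nat.card_Ico]
  have := Finset.card_le_card hsub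
  rw [Nat.card_Ico] at this
  have hTj := hlo j
  omega

/-- Smith's WSPT rule: with nonnegative weights, the early WSPT schedule minimizes
the total weighted completion time over all feasible single-machine schedules. -/
theorem wspt_minimizes_weighted_completion
    {J : Type*} [Fintype J] [Nonempty J]
    (p : J → ℕ) (w : J → ℚ) (T0 Tf : ℕ)
    (hp : ∀ j, 1 ≤ p j) (hT : T0 + ∑ j, p j ≤ Tf)
    (hw : ∀ j, 0 ≤ w j)
    (e : Fin (Fintype.card J) ≃ J)
    (hord : ∀ i : ℕ, ∀ h : i + 1 < Fintype.card J,
      w (e ⟨i + 1, h⟩) / (p (e ⟨i + 1, h⟩) : ℚ)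
        ≤ w (e ⟨i, Nat.lt_of_succ_lt h⟩) / (p (e ⟨i, Nat.lt_of_succ_lt h⟩) : ℚ))
    (SW : J → ℕ)
    (hSW0 : SW (e ⟨0, Fintype.card_pos⟩) = T0)
    (hSWstep : ∀ i : ℕ, ∀ h : i + 1 < Fintype.card J,
      SW (e ⟨i + 1, h⟩)
        = SW (e ⟨i, Nat.lt_of_succ_lt h⟩) + p (e ⟨i, Nat.lt_of_succ_lt h⟩)) :
    ∀ S : J → ℕ,
      (∀ j, T0 ≤ S j) → (∀ j, S j + p j ≤ Tf) →
      (∀ j k, j ≠ k → S j + p j ≤ S k ∨ S k + p k ≤ S j) →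
      ∑ j, w j * ((SW j + p j : ℕ) : ℚ) ≤ ∑ j, w j * ((S j + p j : ℕ) : ℚ) := by
  classical
  intro S hlo hhi hnol
  set v : Fin (Fintype.card J) → ℚ := fun i => w (e i) with hv
  set q : Fin (Fintype.card J) → ℚ := fun i => (p (e i) : ℚ) with hq
  have hq0 : ∀ i, (0:ℚ) < q i := by
    intro i
    simp only [hq]
    exact_mod_cast Nat.lt_of_lt_of_le Nat.zero_lt_one (hp (e i))
  -- ratio antitonicity
  have hratio0 : ∀ d a : ℕ, ∀ h : a + d < Fintype.card J,
      w (e ⟨a + d, h⟩) / (p (e ⟨a + d, h⟩) : ℚ)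
        ≤ w (e ⟨a, by omega⟩) / (p (e ⟨a, by omega⟩) : ℚ) := by
    intro d
    induction d with
    | zero => intro a h; exact le_refl _
    | succ d ih =>
      intro a h
      have h' : a + d < Fintype.card J := by omega
      have h1 := hord (a + d) (by omega : a + d + 1 < Fintype.card J)
      have h2 := ih a h'
      have e1 : (⟨a + (d+1), h⟩ : Fin (Fintype.card J)) = ⟨a + d + 1, by omega⟩ := by
        apply Fin.ext; simp; omega
      rw [e1]
      exact le_trans h1 h2
  have hr : ∀ l i : Fin (Fintype.card J), l ≤ i → v i * q l ≤ v l * q i := by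
    intro l i hle
    have hle' : (l : ℕ) ≤ (i : ℕ) := hle
    have hdiv : w (e i) / (p (e i) : ℚ) ≤ w (e l) / (p (e l) : ℚ) := by
      have h := hratio0 ((i : ℕ) - (l : ℕ)) (l : ℕ)
        (by omega : (l:ℕ) + ((i:ℕ) - (l:ℕ)) < Fintype.card J)
      have e1 : (⟨(l:ℕ) + ((i:ℕ) - (l:ℕ)), by omega⟩ : Fin (Fintype.card J)) = i := by
        apply Fin.ext; simp; omega
      have e2 : (⟨(l:ℕ), by omega⟩ : Fin (Fintype.card J)) = l := by apply Fin.ext; simp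
      rwa [e1, e2] at h
    exact (div_le_div_iff₀ (hq0 i) (hq0 l)).mp hdiv
  -- WSPT completion times
  have hSWc : ∀ m : ℕ, ∀ h : m < Fintype.card J,
      ((SW (e ⟨m, h⟩) + p (e ⟨m, h⟩) : ℕ) : ℚ)
        = (T0 : ℚ) + ∑ l : Fin (Fintype.card J),
            (if l ≤ (⟨m, h⟩ : Fin (Fintype.card J)) then q l else 0) := by
    intro m
    induction m with
    | zero =>
      intro h
      have hfilt : ∀ l : Fin (Fintype.card J),
          (l ≤ (⟨0, h⟩ : Fin (Fintype.card J))) ↔ l = ⟨0, h⟩ := by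
        intro l
        simp only [Fin.le_def, Fin.ext_iff]
        omega
      rw [Finset.sum_congr rfl (fun l _ => by rw [if_congr (hfilt l) rfl rfl])]
      rw [Finset.sum_ite_eq' univ (⟨0, h⟩ : Fin (Fintype.card J)) q]
      simp only [Finset.mem_univ, if_true]
      have h0 : SW (e ⟨0, h⟩) = T0 := hSW0
      rw [h0]
      push_cast
      simp [hq]
    | succ m ih =>
      intro h
      have h' : m < Fintype.card J := by omega
      have hstep : SW (e ⟨m + 1, h⟩) = SW (e ⟨m, h'⟩) + p (e ⟨m, h'⟩) := hSWstep m h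
      have hsplit : ∀ l : Fin (Fintype.card J),
          (if l ≤ (⟨m + 1, h⟩ : Fin (Fintype.card J)) then q l else 0)
            = (if l = (⟨m + 1, h⟩ : Fin (Fintype.card J)) then q l else 0)
              + (if l ≤ (⟨m, h'⟩ : Fin (Fintype.card J)) then q l else 0) := by
        intro l
        by_cases h1 : l = (⟨m + 1, h⟩ : Fin (Fintype.card J))
        · subst h1
          have : ¬ ((⟨m + 1, h⟩ : Fin (Fintype.card J)) ≤ ⟨m, h'⟩) := by
            simp [Fin.le_def]
          simp [this]
        · have : (l ≤ (⟨m + 1, h⟩ : Fin (Fintype.card J)))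
              ↔ (l ≤ (⟨m, h'⟩ : Fin (Fintype.card J))) := by
            have hvne : (l : ℕ) ≠ m + 1 := fun hc => h1 (Fin.ext hc)
            simp only [Fin.le_def]
            omega
          simp [h1, this]
      rw [Finset.sum_congr rfl (fun l _ => hsplit l), Finset.sum_add_distrib]
      rw [Finset.sum_ite_eq' univ (⟨m + 1, h⟩ : Fin (Fintype.card J)) q]
      simp only [Finset.mem_univ, if_true]
      have ihm := ih h'
      rw [hstep]
      push_cast
      push_cast at ihm
      simp only [hq] at ihm ⊢
      linarith
  -- rewrite LHS
  have hLHS : ∑ j, w j * ((SW j + p j : ℕ) : ℚ)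
      = ∑ i : Fin (Fintype.card J),
          v i * ((T0 : ℚ) + ∑ l : Fin (Fintype.card J), (if l ≤ i then q l else 0)) := by
    rw [← Equiv.sum_comp e (fun j => w j * ((SW j + p j : ℕ) : ℚ))]
    apply Finset.sum_congr rfl
    intro i _
    have hc := hSWc (i : ℕ) i.isLt
    rw [show (⟨(i : ℕ), i.isLt⟩ : Fin (Fintype.card J)) = i from Fin.ext rfl] at hc
    rw [hc]
  set R : Fin (Fintype.card J) → Fin (Fintype.card J) → Prop :=
    fun l i => S (e l) ≤ S (e i) with hR
  -- lower bound on RHS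
  have hRHS : ∑ i : Fin (Fintype.card J),
        v i * ((T0 : ℚ) + ∑ l : Fin (Fintype.card J), (if R l i then q l else 0))
      ≤ ∑ j, w j * ((S j + p j : ℕ) : ℚ) := by
    rw [← Equiv.sum_comp e (fun j => w j * ((S j + p j : ℕ) : ℚ))]
    apply Finset.sum_le_sum
    intro i _
    apply mul_le_mul_of_nonneg_left _ (hw (e i))
    have hlb := wspt_sched_lb p S T0 hp hlo hnol (e i)
    have hsum : ∑ l : Fin (Fintype.card J), (if R l i then q l else 0)
        = ∑ k : J, (if S k ≤ S (e i) then (p k : ℚ) else 0) := by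
      rw [← Equiv.sum_comp e (fun k => if S k ≤ S (e i) then (p k : ℚ) else 0)]
    rw [hsum, ← Finset.sum_filter]
    have hcast : ∑ k ∈ univ.filter (fun k => S k ≤ S (e i)), (p k : ℚ)
        = ((∑ k ∈ univ.filter (fun k => S k ≤ S (e i)), p k : ℕ) : ℚ) := by
      push_cast; rfl
    rw [hcast]
    have : ((T0 + ∑ k ∈ univ.filter (fun k => S k ≤ S (e i)), p k : ℕ) : ℚ)
        ≤ ((S (e i) + p (e i) : ℕ) : ℚ) := by exact_mod_cast hlb
    push_cast at this ⊢
    linarith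
  -- middle comparison
  have hmid : ∑ i : Fin (Fintype.card J),
        v i * ((T0 : ℚ) + ∑ l : Fin (Fintype.card J), (if l ≤ i then q l else 0))
      ≤ ∑ i : Fin (Fintype.card J),
        v i * ((T0 : ℚ) + ∑ l : Fin (Fintype.card J), (if R l i then q l else 0)) := by
    simp only [mul_add, Finset.sum_add_distrib, Finset.mul_sum, mul_ite, mul_zero]
    apply add_le_add_right
    exact wspt_key v q (fun i => hw (e i)) (fun i => le_of_lt (hq0 i)) hr R
      (fun i => le_refl _) (fun i l => le_total (S (e i)) (S (e l)))
  rw [hLHS]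
  exact le_trans hmid hRHS
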